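/- Let $p$ be an odd prime and let $G \le \mathrm{GL}_2(\mathbb{F}_p)$ be a subgroup containing an element $c$ with $c^2 = I$, $\det(c) = -1$, and $\mathrm{tr}(c) = 0$. If the natural action of $G$ on $\mathbb{F}_p^2$ is irreducible, then it is absolutely irreducible, i.e., the action of $G$ on $\overline{\mathbb{F}_p}^2$ obtained by extension of scalars is irreducible. -/

import Mathlib

/-- If `(a, b) ≠ (0, 0)` and `a * x + b * y = 0` in a field, then `(x, y)` lies on the
line spanned by `(b, -a)`. -/
lemma ker_aux {K : Type*} [Field K] (a b : K) (hab : ¬(a = 0 ∧ b = 0)) (x y : K)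
    (h : a * x + b * y = 0) : ∃ t : K, x = t * b ∧ y = t * (-a) := by
  by_cases hb : b = 0
  · have ha : a ≠ 0 := fun ha => hab ⟨ha, hb⟩
    have hx : x = 0 := by
      have h' : a * x = 0 := by rw [hb] at h; simpa using h
      exact (mul_eq_zero.mp h').resolve_left ha
    refine ⟨y / (-a), by simp [hx, hb], ?_⟩
    field_simp
  · refine ⟨x / b, by field_simp, ?_⟩
    field_simp
    linear_combination h

theorem stmt_16 (p : ℕ) [Fact p.Prime] (hp : Odd p)
    (G : Subgroup (GL (Fin 2) (ZMod p)))
    (c : GL (Fin 2) (ZMod p)) (hcG : c ∈ G) (hc2 : c ^ 2 = 1)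
    (hdet : Matrix.GeneralLinearGroup.det c = -1)
    (htr : Matrix.trace (c : Matrix (Fin 2) (Fin 2) (ZMod p)) = 0)
    (hirr : ∀ W : Submodule (ZMod p) (Fin 2 → ZMod p),
      (∀ g ∈ G, ∀ v ∈ W, (g : Matrix (Fin 2) (Fin 2) (ZMod p)).mulVec v ∈ W) →
      W = ⊥ ∨ W = ⊤) :
    ∀ W : Submodule (AlgebraicClosure (ZMod p)) (Fin 2 → AlgebraicClosure (ZMod p)),
      (∀ g ∈ G, ∀ v ∈ W,
        ((g : Matrix (Fin 2) (Fin 2) (ZMod p)).map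
          (algebraMap (ZMod p) (AlgebraicClosure (ZMod p)))).mulVec v ∈ W) →
      W = ⊥ ∨ W = ⊤ := by
  intro W hW
  by_contra hcon
  push_neg at hcon
  obtain ⟨hWbot, hWtop⟩ := hcon
  set K := AlgebraicClosure (ZMod p) with hK
  set f := algebraMap (ZMod p) K with hf
  have hfinj : Function.Injective f := (algebraMap (ZMod p) K).injective
  -- `2 ≠ 0` in `ZMod p`
  have h2 : (2 : ZMod p) ≠ 0 := by
    intro h
    have hdvd : p ∣ 2 := by
      have := (ZMod.natCast_eq_zero_iff 2 p).mp (by exact_mod_cast h)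
      exact this
    have hp2 : p = 2 := (Nat.prime_dvd_prime_iff_eq Fact.out Nat.prime_two).mp hdvd
    rw [hp2, Nat.odd_iff] at hp
    omega
  -- trace and determinant of `c` as matrix identities
  have htrc : (c : Matrix (Fin 2) (Fin 2) (ZMod p)) 0 0
      + (c : Matrix (Fin 2) (Fin 2) (ZMod p)) 1 1 = 0 := by
    rwa [Matrix.trace_fin_two] at htr
  -- `W` is spanned by a single nonzero vector `w`
  obtain ⟨w, hwW, hw0⟩ := Submodule.exists_mem_ne_zero_of_ne_bot hWbot
  have hspan_le : Submodule.span K {w} ≤ W := by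
    rw [Submodule.span_singleton_le_iff_mem]; exact hwW
  have hWrank : Module.finrank K W ≤ 1 := by
    have h1 : Module.finrank K W < Module.finrank K (Fin 2 → K) :=
      Submodule.finrank_lt hWtop
    rw [Module.finrank_fin_fun] at h1
    omega
  have hWspan : W = Submodule.span K {w} :=
    (Submodule.eq_of_le_of_finrank_le hspan_le
      (by rw [finrank_span_singleton hw0]; exact hWrank)).symm
  -- `c` acts on `w` by a scalar `μ` with `μ * μ = 1`
  set Mc := (c : Matrix (Fin 2) (Fin 2) (ZMod p)).map f with hMc
  have hcw : Mc.mulVec w ∈ Submodule.span K {w} := hWspan ▸ hW c hcG w hwW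
  obtain ⟨μ, hμ⟩ := Submodule.mem_span_singleton.mp hcw
  have hcc : (c : Matrix (Fin 2) (Fin 2) (ZMod p)) * c = 1 := by
    have := congrArg (Units.val) hc2
    simpa [pow_two] using this
  have hMcMc : Mc * Mc = 1 := by
    rw [hMc, ← Matrix.map_mul, hcc, Matrix.map_one f (map_zero f) (map_one f)]
  have hμ2 : μ * μ = 1 := by
    have h1 : Mc.mulVec (Mc.mulVec w) = w := by
      rw [Matrix.mulVec_mulVec, hMcMc, Matrix.one_mulVec]
    rw [← hμ, Matrix.mulVec_smul, ← hμ, smul_smul] at h1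
    have h2' : (μ * μ) • w = (1 : K) • w := by rw [h1, one_smul]
    exact smul_left_injective K hw0 h2'
  -- descend `μ` to `ε : ZMod p`
  obtain ⟨ε, hεf, hε2⟩ : ∃ ε : ZMod p, f ε = μ ∧ ε * ε = 1 := by
    rcases mul_self_eq_one_iff.mp hμ2 with h | h
    · exact ⟨1, by simp [h], by ring⟩
    · exact ⟨-1, by simp [h], by ring⟩
  have hε0 : ε ≠ 0 := by
    intro h; rw [h, mul_zero] at hε2; exact one_ne_zero hε2.symm
  -- the two coordinate equations satisfied by `w`
  set cm := (c : Matrix (Fin 2) (Fin 2) (ZMod p)) with hcm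
  have hrow : ∀ i, f (cm i 0) * w 0 + f (cm i 1) * w 1 = μ * w i := by
    intro i
    have hμi := congrFun hμ i
    simp only [Pi.smul_apply, smul_eq_mul] at hμi
    rw [hμi, hMc]
    simp [Matrix.mulVec, dotProduct, Fin.sum_univ_two, Matrix.map_apply]
  have hrow0 : f (cm 0 0 - ε) * w 0 + f (cm 0 1) * w 1 = 0 := by
    have h := hrow 0
    rw [map_sub, hεf]
    linear_combination h
  have hrow1 : f (cm 1 0) * w 0 + f (cm 1 1 - ε) * w 1 = 0 := by
    have h := hrow 1
    rw [map_sub, hεf]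
    linear_combination h
  -- find a rational row `(a, b) ≠ 0` annihilating `w`
  obtain ⟨a, b, hab, hwab⟩ : ∃ a b : ZMod p, ¬(a = 0 ∧ b = 0) ∧
      f a * w 0 + f b * w 1 = 0 := by
    by_cases h0 : cm 0 0 - ε = 0 ∧ cm 0 1 = 0
    · refine ⟨cm 1 0, cm 1 1 - ε, ?_, hrow1⟩
      rintro ⟨h10, h11⟩
      have e00 : cm 0 0 = ε := by linear_combination h0.1
      have e11 : cm 1 1 = ε := by linear_combination h11
      have : (2 : ZMod p) * ε = 0 := by
        rw [e00, e11] at htrc; linear_combination htrc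
      rcases mul_eq_zero.mp this with h | h
      · exact h2 h
      · exact hε0 h
    · exact ⟨cm 0 0 - ε, cm 0 1, h0, hrow0⟩
  -- the rational eigenvector `v`
  set v : Fin 2 → ZMod p := ![b, -a] with hv
  obtain ⟨j, hvj⟩ : ∃ j, v j ≠ 0 := by
    rcases not_and_or.mp hab with h | h
    · exact ⟨1, by simp [hv, h]⟩
    · exact ⟨0, by simp [hv, h]⟩
  have hv0 : v ≠ 0 := fun h => hvj (by rw [h]; rfl)
  set fv : Fin 2 → K := f ∘ v with hfv
  -- `w` is a scalar multiple of `fv`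
  obtain ⟨t, ht0, ht1⟩ := ker_aux (f a) (f b)
    (by rintro ⟨ha, hb⟩; exact hab ⟨hfinj (by simpa using ha), hfinj (by simpa using hb)⟩)
    (w 0) (w 1) hwab
  have hwt : w = t • fv := by
    funext i
    fin_cases i
    · simpa [hfv, hv] using ht0
    · simp only [hfv, hv, Pi.smul_apply, Function.comp_apply, smul_eq_mul]
      simpa [map_neg] using ht1
  have ht0' : t ≠ 0 := by
    rintro rfl; rw [zero_smul] at hwt; exact hw0 hwt
  have hfvW : fv ∈ W := by
    have : fv = t⁻¹ • w := by
      rw [hwt, smul_smul, inv_mul_cancel₀ ht0', one_smul]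
    rw [this]; exact W.smul_mem _ hwW
  have hWle : W ≤ Submodule.span K {fv} := by
    rw [hWspan, Submodule.span_singleton_le_iff_mem]
    exact Submodule.mem_span_singleton.mpr ⟨t, hwt.symm⟩
  -- the rational line `L`
  set L := Submodule.span (ZMod p) {v} with hL
  -- `g • v` stays in `L` for every `g ∈ G`
  have hkey : ∀ g ∈ G, (g : Matrix (Fin 2) (Fin 2) (ZMod p)).mulVec v ∈ L := by
    intro g hg
    have hmem : ((g : Matrix (Fin 2) (Fin 2) (ZMod p)).map f).mulVec fv ∈
        Submodule.span K {fv} := hWle (hW g hg fv hfvW)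
    obtain ⟨s, hs⟩ := Submodule.mem_span_singleton.mp hmem
    have hcoord : ∀ i, s * f (v i) =
        f (((g : Matrix (Fin 2) (Fin 2) (ZMod p)).mulVec v) i) := by
      intro i
      have h1 := congrFun hs i
      simp only [Pi.smul_apply, smul_eq_mul, hfv, Function.comp_apply] at h1
      rw [h1]
      exact (RingHom.map_mulVec f _ v i).symm
    set a' : ZMod p := ((g : Matrix (Fin 2) (Fin 2) (ZMod p)).mulVec v) j * (v j)⁻¹
      with ha'
    have hfvj : f (v j) ≠ 0 := fun h => hvj (hfinj (by simpa using h))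
    have hs' : s = f a' := by
      have := hcoord j
      rw [ha', map_mul, map_inv₀]
      rw [eq_mul_inv_iff_mul_eq₀ hfvj]
      linear_combination this
    have hgv : (g : Matrix (Fin 2) (Fin 2) (ZMod p)).mulVec v = a' • v := by
      funext i
      apply hfinj
      have := hcoord i
      rw [hs'] at this
      rw [← this]
      simp [mul_comm]
    rw [hgv]
    exact L.smul_mem _ (Submodule.mem_span_singleton_self v)
  have hLinv : ∀ g ∈ G, ∀ u ∈ L, (g : Matrix (Fin 2) (Fin 2) (ZMod p)).mulVec u ∈ L := by
    intro g hg u hu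
    obtain ⟨s, rfl⟩ := Submodule.mem_span_singleton.mp hu
    rw [Matrix.mulVec_smul]
    exact L.smul_mem _ (hkey g hg)
  rcases hirr L hLinv with h | h
  · have : v ∈ L := Submodule.mem_span_singleton_self v
    rw [h, Submodule.mem_bot] at this
    exact hv0 this
  · have h1 : Module.finrank (ZMod p) L = 1 := finrank_span_singleton hv0
    rw [h] at h1
    rw [finrank_top, Module.finrank_fin_fun] at h1
    omega
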